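/- Let p and t be sequences of distinct elements with |p| = m, and let w = t[j..j+m-1] be a window of length m. Let ℓ = lcp(PD_p, PD_w) (length of longest common prefix of the parent-distance tables) and r = lcs(RPD_p, RPD_w) (length of longest common suffix of the reverse parent-distance tables). If ℓ + r ≥ m - 1 then p matches w with at most one mismatch in the Cartesian tree sense: there exists h ∈ {1,...,m} with C(p[1..h-1]) = C(w[1..h-1]) and C(p[h+1..m]) = C(w[h+1..m]). -/

import Mathlib

/-- Binary tree shapes (Cartesian trees are determined by their shape). -/
inductive BTree : Type
  | nil : BTree
  | node : BTree → BTree → BTree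
deriving DecidableEq

namespace BTree

/-- Number of nodes. -/
def size : BTree → ℕ
  | nil => 0
  | node l r => size l + size r + 1

/-- Length of the leftmost path. -/
def LMP : BTree → ℕ
  | nil => 0
  | node l _ => LMP l + 1

/-- Length of the rightmost path. -/
def RMP : BTree → ℕ
  | nil => 0
  | node _ r => RMP r + 1

end BTree

/-- Minimum value of a list (0 for the empty list). -/
def listMin : List ℤ → ℤ
  | [] => 0
  | a :: t => t.foldl min a

/-- Index (0-based) of the minimum of a list. -/
def minIdx (l : List ℤ) : ℕ := l.idxOf (listMin l)

/-- Cartesian tree of a list, with fuel for termination. -/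
def ctreeAux : ℕ → List ℤ → BTree
  | 0, _ => .nil
  | _ + 1, [] => .nil
  | n + 1, a :: t =>
      let g := minIdx (a :: t)
      .node (ctreeAux n ((a :: t).take g)) (ctreeAux n ((a :: t).drop (g + 1)))

/-- Cartesian tree of a list: the root is the position of the minimum,
its subtrees are the Cartesian trees of the prefix and suffix around it. -/
def ctreeL (l : List ℤ) : BTree := ctreeAux l.length l

/-- The factor x[a..b] (1-based positions) of a sequence, as a list. -/
def seqList (x : ℕ → ℤ) (a b : ℕ) : List ℤ :=
  (List.range (b + 1 - a)).map (fun k => x (a + k))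

/-- Cartesian tree of the sequence x[1..m]. -/
def ctreeOf (m : ℕ) (x : ℕ → ℤ) : BTree := ctreeL (seqList x 1 m)

/-- Positions j < h (1-based) with x[j] < x[h]. -/
def PDset (x : ℕ → ℤ) (h : ℕ) : Finset ℕ :=
  (Finset.Ico 1 h).filter (fun j => x j < x h)

/-- Parent-distance table: PD_x[h] = h - max{j < h : x[j] < x[h]}, 0 if no such j. -/
def PD (x : ℕ → ℤ) (h : ℕ) : ℕ :=
  if hs : (PDset x h).Nonempty then h - (PDset x h).max' hs else 0

/-- Positions h < j ≤ m with x[j] < x[h]. -/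
def RPDset (m : ℕ) (x : ℕ → ℤ) (h : ℕ) : Finset ℕ :=
  (Finset.Ioc h m).filter (fun j => x j < x h)

/-- Reverse parent-distance table: RPD_x[h] = min{j > h : x[j] < x[h]} - h, 0 if no such j. -/
def RPD (m : ℕ) (x : ℕ → ℤ) (h : ℕ) : ℕ :=
  if hs : (RPDset m x h).Nonempty then (RPDset m x h).min' hs - h else 0

/-- Referent of h: the smallest position j > h with x[j] < x[h], or -1 if none. -/
def refD (m : ℕ) (x : ℕ → ℤ) (h : ℕ) : ℤ :=
  if hs : (RPDset m x h).Nonempty then ((RPDset m x h).min' hs : ℤ) else -1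

/-- Skipped-number table: SN_x[h] is the number of nodes on the rightmost path of the
left subtree of node h in C(x), i.e. the number of positions whose referent is h. -/
def SN (m : ℕ) (x : ℕ → ℤ) (h : ℕ) : ℕ :=
  ((Finset.Ico 1 h).filter (fun j => refD m x j = (h : ℤ))).card

/-- The swap τ(x,i): exchange the entries at positions i and i+1. -/
def swapAt (x : ℕ → ℤ) (i : ℕ) : ℕ → ℤ :=
  fun j => if j = i then x (i + 1) else if j = i + 1 then x i else x j

/-- ng(T,i): the Cartesian trees obtained from a sequence realizing T by one swap
at position i (valid positions are 1 ≤ i ≤ m-1). -/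
def ngi (m : ℕ) (T : BTree) (i : ℕ) : Set BTree :=
  { S | 1 ≤ i ∧ i + 1 ≤ m ∧ ∃ x : ℕ → ℤ, Set.InjOn x (Set.Icc 1 m) ∧
        ctreeOf m x = T ∧ S = ctreeOf m (swapAt x i) }

/-- ng(T): the swap neighbourhood of T. -/
def ng (m : ℕ) (T : BTree) : Set BTree := ⋃ i, ngi m T i

/-- Number of permutations of {1,...,n} whose Cartesian tree is A. -/
noncomputable def permCount (n : ℕ) (A : BTree) : ℕ :=
  Set.ncard { σ : Equiv.Perm (Fin n) |
    ctreeL (List.ofFn (fun k : Fin n => ((σ k : ℕ) : ℤ) + 1)) = A }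

/-- Product over all nodes t of A of the size of the subtree rooted at t. -/
def hookProd : BTree → ℕ
  | .nil => 1
  | .node l r => (BTree.node l r).size * hookProd l * hookProd r


section AuxLemmas

lemma foldlMin_mem (t : List ℤ) (a : ℤ) : t.foldl min a ∈ a :: t := by
  induction t generalizing a with
  | nil => simp
  | cons b t ih =>
    have h := ih (min a b)
    simp only [List.foldl_cons]
    rcases min_choice a b with hm | hm <;> rw [hm] at h ⊢ <;>
      simp only [List.mem_cons] at h ⊢ <;> tauto

lemma foldlMin_le (t : List ℤ) (a : ℤ) : ∀ y ∈ a :: t, t.foldl min a ≤ y := by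
  induction t generalizing a with
  | nil => intro y hy; simp at hy; simp [hy]
  | cons b t ih =>
    intro y hy
    simp only [List.mem_cons] at hy
    simp only [List.foldl_cons]
    rcases hy with rfl | rfl | hy
    · exact le_trans (ih (min y b) (min y b) List.mem_cons_self) (min_le_left _ _)
    · exact le_trans (ih (min a y) (min a y) List.mem_cons_self) (min_le_right _ _)
    · exact ih (min a b) y (List.mem_cons_of_mem _ hy)

lemma listMin_mem (l : List ℤ) (hl : l ≠ []) : listMin l ∈ l := by
  cases l with
  | nil => simp at hl
  | cons a t => exact foldlMin_mem t a

lemma listMin_le (l : List ℤ) : ∀ y ∈ l, listMin l ≤ y := by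
  cases l with
  | nil => simp
  | cons a t => exact foldlMin_le t a

lemma seqList_length (x : ℕ → ℤ) (a b : ℕ) : (seqList x a b).length = b + 1 - a := by
  simp [seqList]

lemma seqList_getElem (x : ℕ → ℤ) (a b i : ℕ) (hi : i < (seqList x a b).length) :
    (seqList x a b)[i] = x (a + i) := by
  simp [seqList]

lemma seqList_take (x : ℕ → ℤ) (a b g : ℕ) (h1 : a + 1 ≤ g) (h2 : g ≤ b) :
    (seqList x (a+1) b).take (g - (a+1)) = seqList x (a+1) (g-1) := by
  apply List.ext_getElem
  · simp [seqList_length]; omega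
  · intro i h₁ h₂
    rw [List.getElem_take, seqList_getElem, seqList_getElem]

lemma seqList_drop (x : ℕ → ℤ) (a b g : ℕ) (h1 : a + 1 ≤ g) (h2 : g ≤ b) :
    (seqList x (a+1) b).drop (g - (a+1) + 1) = seqList x (g+1) b := by
  apply List.ext_getElem
  · simp [seqList_length]; omega
  · intro i h₁ h₂
    rw [List.getElem_drop, seqList_getElem, seqList_getElem]
    congr 1
    simp [seqList_length] at h₁ h₂
    omega

end AuxLemmas
section AuxLemmas2

lemma minIdx_lt_length (l : List ℤ) (hl : l ≠ []) : minIdx l < l.length :=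
  List.idxOf_lt_length_iff.mpr (listMin_mem l hl)

lemma minIdx_seqList (x : ℕ → ℤ) (a b g : ℕ) (hg1 : a + 1 ≤ g) (hg2 : g ≤ b)
    (hmin : ∀ j, a + 1 ≤ j → j ≤ b → x g ≤ x j)
    (hinj : Set.InjOn x (Set.Icc (a+1) b)) :
    minIdx (seqList x (a+1) b) = g - (a+1) := by
  have hlen : (seqList x (a+1) b).length = b - a := by rw [seqList_length]; omega
  have hne : seqList x (a+1) b ≠ [] := by
    intro e; rw [e] at hlen; simp at hlen; omega
  have hgl : x g ∈ seqList x (a+1) b := by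
    apply List.mem_iff_getElem.mpr
    refine ⟨g - (a+1), by rw [seqList_length]; omega, ?_⟩
    rw [seqList_getElem]; congr 1; omega
  have hmem := listMin_mem _ hne
  obtain ⟨i, hi, hxi⟩ := List.mem_iff_getElem.mp hmem
  have h1 : listMin (seqList x (a+1) b) = x (a + 1 + i) :=
    hxi.symm.trans (seqList_getElem _ _ _ _ hi)
  have h2 : listMin (seqList x (a+1) b) = x g := by
    apply le_antisymm (listMin_le _ _ hgl)
    rw [h1]
    apply hmin _ (by omega)
    rw [hlen] at hi; omega
  unfold minIdx
  rw [h2]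
  have hlt : (seqList x (a+1) b).idxOf (x g) < (seqList x (a+1) b).length :=
    List.idxOf_lt_length_iff.mpr hgl
  have h3 : x (a + 1 + (seqList x (a+1) b).idxOf (x g)) = x g :=
    (seqList_getElem _ _ _ _ hlt).symm.trans (List.getElem_idxOf hlt)
  have h4 := hinj (Set.mem_Icc.mpr ⟨by omega, by
      have := hlt; rw [hlen] at this; omega⟩) (Set.mem_Icc.mpr ⟨hg1, hg2⟩) h3
  omega

lemma ctreeAux_congr : ∀ (n m : ℕ) (l : List ℤ), l.length ≤ n → l.length ≤ m →
    ctreeAux n l = ctreeAux m l := by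
  intro n
  induction n with
  | zero =>
    intro m l h1 _
    have : l = [] := List.length_eq_zero_iff.mp (by omega)
    subst this
    cases m <;> rfl
  | succ n ih =>
    intro m l h1 h2
    cases l with
    | nil => cases m <;> rfl
    | cons a t =>
      cases m with
      | zero => simp at h2
      | succ m =>
        have hg := minIdx_lt_length (a :: t) (by simp)
        simp only [List.length_cons] at hg h1 h2
        rw [ctreeAux, ctreeAux]
        congr 1
        · exact ih m _ (by simp [List.length_take]; omega) (by simp [List.length_take]; omega)
        · exact ih m _ (by simp; omega) (by simp; omega)

lemma ctreeL_eq_node (l : List ℤ) (hl : l ≠ []) :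
    ctreeL l = .node (ctreeL (l.take (minIdx l))) (ctreeL (l.drop (minIdx l + 1))) := by
  have hg := minIdx_lt_length l hl
  obtain ⟨a, t, rfl⟩ := List.exists_cons_of_ne_nil hl
  simp only [List.length_cons] at hg
  show ctreeAux ((a :: t).length) (a :: t) = _
  rw [List.length_cons, ctreeAux]
  congr 1
  · exact ctreeAux_congr t.length ((a :: t).take (minIdx (a :: t))).length _
      (by simp [List.length_take]; omega) le_rfl
  · exact ctreeAux_congr t.length ((a :: t).drop (minIdx (a :: t) + 1)).length _
      (by simp only [List.length_drop, List.length_cons]; omega) le_rfl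

end AuxLemmas2
section AuxLemmas3

/-- Parent distance with left boundary a (positions in (a,h)). -/
def PDa (a : ℕ) (x : ℕ → ℤ) (h : ℕ) : ℕ :=
  if hs : ((Finset.Ioo a h).filter (fun j => x j < x h)).Nonempty
  then h - ((Finset.Ioo a h).filter (fun j => x j < x h)).max' hs else 0

lemma PDa_zero (x : ℕ → ℤ) (h : ℕ) : PDa 0 x h = PD x h := by
  have he : Finset.Ioo 0 h = Finset.Ico 1 h := by ext j; simp; omega
  unfold PDa PD PDset
  rw [he]

lemma PDa_shift (a b g h : ℕ) (x : ℕ → ℤ)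
    (hg1 : a + 1 ≤ g) (hg2 : g ≤ b)
    (hmin : ∀ j, a + 1 ≤ j → j ≤ b → x g ≤ x j)
    (hinj : Set.InjOn x (Set.Icc (a+1) b))
    (hh1 : g < h) (hh2 : h ≤ b) :
    PDa g x h = if PDa a x h < h - g then PDa a x h else 0 := by
  have hxgh : x g < x h := lt_of_le_of_ne (hmin h (by omega) hh2)
    (fun e => by
      have := hinj (Set.mem_Icc.mpr ⟨hg1, hg2⟩) (Set.mem_Icc.mpr ⟨by omega, hh2⟩) e
      omega)
  have hgS : g ∈ (Finset.Ioo a h).filter (fun j => x j < x h) := by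
    simp only [Finset.mem_filter, Finset.mem_Ioo]
    exact ⟨⟨by omega, hh1⟩, hxgh⟩
  have hSne : ((Finset.Ioo a h).filter (fun j => x j < x h)).Nonempty := ⟨g, hgS⟩
  set M := ((Finset.Ioo a h).filter (fun j => x j < x h)).max' hSne with hM
  have hMS : M ∈ (Finset.Ioo a h).filter (fun j => x j < x h) := Finset.max'_mem _ hSne
  have hMg : g ≤ M := Finset.le_max' _ g hgS
  simp only [Finset.mem_filter, Finset.mem_Ioo] at hMS
  have hPa : PDa a x h = h - M := by unfold PDa; rw [dif_pos hSne]
  rcases eq_or_lt_of_le hMg with heq | hlt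
  · have hTemp : ¬ ((Finset.Ioo g h).filter (fun j => x j < x h)).Nonempty := by
      rintro ⟨j, hj⟩
      simp only [Finset.mem_filter, Finset.mem_Ioo] at hj
      have hjS : j ∈ (Finset.Ioo a h).filter (fun j => x j < x h) := by
        simp only [Finset.mem_filter, Finset.mem_Ioo]
        exact ⟨⟨by omega, hj.1.2⟩, hj.2⟩
      have := Finset.le_max' _ j hjS
      rw [← hM] at this
      omega
    have hz : PDa g x h = 0 := by unfold PDa; rw [dif_neg hTemp]
    rw [hz, hPa, ← heq, if_neg (by omega)]
  · have hMT : M ∈ (Finset.Ioo g h).filter (fun j => x j < x h) := by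
      simp only [Finset.mem_filter, Finset.mem_Ioo]
      exact ⟨⟨hlt, hMS.1.2⟩, hMS.2⟩
    have hTne : ((Finset.Ioo g h).filter (fun j => x j < x h)).Nonempty := ⟨M, hMT⟩
    have hTmax : ((Finset.Ioo g h).filter (fun j => x j < x h)).max' hTne = M := by
      apply le_antisymm
      · apply Finset.le_max' _ _
        have := Finset.max'_mem _ hTne
        simp only [Finset.mem_filter, Finset.mem_Ioo] at this ⊢
        exact ⟨⟨by omega, this.1.2⟩, this.2⟩
      · exact Finset.le_max' _ M hMT
    have hv : PDa g x h = h - M := by unfold PDa; rw [dif_pos hTne, hTmax]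
    rw [hv, hPa, if_pos (by omega)]

lemma RPD_shift (a b g h : ℕ) (x : ℕ → ℤ)
    (hg1 : a + 1 ≤ g) (hg2 : g ≤ b)
    (hmin : ∀ j, a + 1 ≤ j → j ≤ b → x g ≤ x j)
    (hinj : Set.InjOn x (Set.Icc (a+1) b))
    (hh1 : a < h) (hh2 : h < g) :
    RPD (g-1) x h = if RPD b x h < g - h then RPD b x h else 0 := by
  have hxgh : x g < x h := lt_of_le_of_ne (hmin h (by omega) (by omega))
    (fun e => by
      have := hinj (Set.mem_Icc.mpr ⟨hg1, hg2⟩) (Set.mem_Icc.mpr ⟨by omega, by omega⟩) e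
      omega)
  have hgS : g ∈ RPDset b x h := by
    unfold RPDset
    simp only [Finset.mem_filter, Finset.mem_Ioc]
    exact ⟨⟨hh2, hg2⟩, hxgh⟩
  have hSne : (RPDset b x h).Nonempty := ⟨g, hgS⟩
  set M := (RPDset b x h).min' hSne with hM
  have hMS : M ∈ RPDset b x h := Finset.min'_mem _ hSne
  have hMg : M ≤ g := Finset.min'_le _ g hgS
  unfold RPDset at hMS
  simp only [Finset.mem_filter, Finset.mem_Ioc] at hMS
  have hPa : RPD b x h = M - h := by unfold RPD; rw [dif_pos hSne]
  rcases eq_or_lt_of_le hMg with heq | hlt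
  · have hTemp : ¬ (RPDset (g-1) x h).Nonempty := by
      rintro ⟨j, hj⟩
      unfold RPDset at hj
      simp only [Finset.mem_filter, Finset.mem_Ioc] at hj
      have hjS : j ∈ RPDset b x h := by
        unfold RPDset
        simp only [Finset.mem_filter, Finset.mem_Ioc]
        exact ⟨⟨hj.1.1, by omega⟩, hj.2⟩
      have := Finset.min'_le _ j hjS
      rw [← hM] at this
      omega
    have hz : RPD (g-1) x h = 0 := by unfold RPD; rw [dif_neg hTemp]
    rw [hz, hPa, heq, if_neg (by omega)]
  · have hMT : M ∈ RPDset (g-1) x h := by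
      unfold RPDset
      simp only [Finset.mem_filter, Finset.mem_Ioc]
      exact ⟨⟨hMS.1.1, by omega⟩, hMS.2⟩
    have hTne : (RPDset (g-1) x h).Nonempty := ⟨M, hMT⟩
    have hTmin : (RPDset (g-1) x h).min' hTne = M := by
      apply le_antisymm
      · exact Finset.min'_le _ M hMT
      · have := Finset.min'_mem _ hTne
        unfold RPDset at this
        simp only [Finset.mem_filter, Finset.mem_Ioc] at this
        apply Finset.le_min'
        intro y hy
        unfold RPDset at hy
        simp only [Finset.mem_filter, Finset.mem_Ioc] at hy
        apply Finset.min'_le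
        unfold RPDset
        simp only [Finset.mem_filter, Finset.mem_Ioc]
        exact ⟨⟨hy.1.1, by omega⟩, hy.2⟩
    have hv : RPD (g-1) x h = M - h := by unfold RPD; rw [dif_pos hTne, hTmin]
    rw [hv, hPa, if_pos (by omega)]

lemma argmin_not_lt (a b gx gy : ℕ) (x y : ℕ → ℤ)
    (hgx1 : a + 1 ≤ gx) (hgx2 : gx ≤ b) (hgy1 : a + 1 ≤ gy) (hgy2 : gy ≤ b)
    (hminx : ∀ j, a + 1 ≤ j → j ≤ b → x gx ≤ x j)
    (hminy : ∀ j, a + 1 ≤ j → j ≤ b → y gy ≤ y j)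
    (hinjx : Set.InjOn x (Set.Icc (a+1) b))
    (hPD : ∀ h, a < h → h ≤ b → PDa a x h = PDa a y h) : ¬ gx < gy := by
  intro hlt
  have h0 : PDa a y gy = 0 := by
    unfold PDa
    rw [dif_neg]
    rintro ⟨j, hj⟩
    simp only [Finset.mem_filter, Finset.mem_Ioo] at hj
    have := hminy j (by omega) (by omega)
    omega
  have h1 : PDa a x gy ≠ 0 := by
    have hxlt : x gx < x gy := lt_of_le_of_ne (hminx gy (by omega) hgy2)
      (fun e => by
        have := hinjx (Set.mem_Icc.mpr ⟨hgx1, hgx2⟩) (Set.mem_Icc.mpr ⟨hgy1, hgy2⟩) e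
        omega)
    have hne : ((Finset.Ioo a gy).filter (fun j => x j < x gy)).Nonempty := by
      refine ⟨gx, ?_⟩
      simp only [Finset.mem_filter, Finset.mem_Ioo]
      exact ⟨⟨by omega, hlt⟩, hxlt⟩
    unfold PDa
    rw [dif_pos hne]
    have := Finset.max'_mem _ hne
    simp only [Finset.mem_filter, Finset.mem_Ioo] at this
    omega
  exact h1 (by rw [hPD gy (by omega) hgy2, h0])

end AuxLemmas3
lemma argmin_not_gt_R (a b gx gy : ℕ) (x y : ℕ → ℤ)
    (hgx1 : a + 1 ≤ gx) (hgx2 : gx ≤ b) (hgy1 : a + 1 ≤ gy) (hgy2 : gy ≤ b)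
    (hminx : ∀ j, a + 1 ≤ j → j ≤ b → x gx ≤ x j)
    (hminy : ∀ j, a + 1 ≤ j → j ≤ b → y gy ≤ y j)
    (hinjy : Set.InjOn y (Set.Icc (a+1) b))
    (hPD : ∀ h, a < h → h ≤ b → RPD b x h = RPD b y h) : ¬ gx < gy := by
  intro hlt
  have h0 : RPD b x gx = 0 := by
    unfold RPD
    rw [dif_neg]
    rintro ⟨j, hj⟩
    unfold RPDset at hj
    simp only [Finset.mem_filter, Finset.mem_Ioc] at hj
    have := hminx j (by omega) (by omega)
    omega
  have h1 : RPD b y gx ≠ 0 := by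
    have hylt : y gy < y gx := lt_of_le_of_ne (hminy gx (by omega) hgx2)
      (fun e => by
        have := hinjy (Set.mem_Icc.mpr ⟨hgy1, hgy2⟩) (Set.mem_Icc.mpr ⟨hgx1, hgx2⟩) e
        omega)
    have hne : (RPDset b y gx).Nonempty := by
      refine ⟨gy, ?_⟩
      unfold RPDset
      simp only [Finset.mem_filter, Finset.mem_Ioc]
      exact ⟨⟨hlt, hgy2⟩, hylt⟩
    unfold RPD
    rw [dif_pos hne]
    have h2 := (Finset.mem_filter.mp (Finset.min'_mem _ hne)).1
    rw [Finset.mem_Ioc] at h2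
    omega
  exact h1 (by rw [← hPD gx (by omega) hgx2, h0])
section MainLemmas

lemma seqList_nil (x : ℕ → ℤ) (a b : ℕ) (h : b ≤ a) : seqList x (a+1) b = [] := by
  have : (seqList x (a+1) b).length = 0 := by rw [seqList_length]; omega
  exact List.length_eq_zero_iff.mp this

lemma lemA : ∀ (n a b : ℕ) (x y : ℕ → ℤ), b - a ≤ n →
    Set.InjOn x (Set.Icc (a+1) b) → Set.InjOn y (Set.Icc (a+1) b) →
    (∀ h, a < h → h ≤ b → PDa a x h = PDa a y h) →
    ctreeL (seqList x (a+1) b) = ctreeL (seqList y (a+1) b) := by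
  intro n
  induction n with
  | zero =>
    intro a b x y hn _ _ _
    rw [seqList_nil x a b (by omega), seqList_nil y a b (by omega)]
  | succ n ih =>
    intro a b x y hn hx hy hPD
    by_cases hab : b ≤ a
    · rw [seqList_nil x a b hab, seqList_nil y a b hab]
    push_neg at hab
    obtain ⟨gx, hgxm, hgxmin⟩ := Finset.exists_min_image (Finset.Icc (a+1) b) x
      ⟨a+1, Finset.mem_Icc.mpr ⟨le_refl _, by omega⟩⟩
    obtain ⟨gy, hgym, hgymin⟩ := Finset.exists_min_image (Finset.Icc (a+1) b) y
      ⟨a+1, Finset.mem_Icc.mpr ⟨le_refl _, by omega⟩⟩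
    rw [Finset.mem_Icc] at hgxm hgym
    have hminx : ∀ j, a + 1 ≤ j → j ≤ b → x gx ≤ x j :=
      fun j h1 h2 => hgxmin j (Finset.mem_Icc.mpr ⟨h1, h2⟩)
    have hminy : ∀ j, a + 1 ≤ j → j ≤ b → y gy ≤ y j :=
      fun j h1 h2 => hgymin j (Finset.mem_Icc.mpr ⟨h1, h2⟩)
    have hgeq : gx = gy := by
      have h1 := argmin_not_lt a b gx gy x y hgxm.1 hgxm.2 hgym.1 hgym.2 hminx hminy hx hPD
      have h2 := argmin_not_lt a b gy gx y x hgym.1 hgym.2 hgxm.1 hgxm.2 hminy hminx hy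
        (fun h h1 h2 => (hPD h h1 h2).symm)
      omega
    subst hgeq
    have hnex : seqList x (a+1) b ≠ [] := by
      intro e
      have := seqList_length x (a+1) b
      rw [e] at this; simp at this; omega
    have hney : seqList y (a+1) b ≠ [] := by
      intro e
      have := seqList_length y (a+1) b
      rw [e] at this; simp at this; omega
    rw [ctreeL_eq_node _ hnex, ctreeL_eq_node _ hney,
      minIdx_seqList x a b gx hgxm.1 hgxm.2 hminx hx,
      minIdx_seqList y a b gx hgym.1 hgym.2 hminy hy,
      seqList_take x a b gx hgxm.1 hgxm.2, seqList_take y a b gx hgym.1 hgym.2,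
      seqList_drop x a b gx hgxm.1 hgxm.2, seqList_drop y a b gx hgym.1 hgym.2]
    have hL : ctreeL (seqList x (a+1) (gx-1)) = ctreeL (seqList y (a+1) (gx-1)) := by
      apply ih a (gx-1) x y (by omega)
        (hx.mono (Set.Icc_subset_Icc (le_refl _) (by omega)))
        (hy.mono (Set.Icc_subset_Icc (le_refl _) (by omega)))
        (fun h h1 h2 => hPD h h1 (by omega))
    have hR : ctreeL (seqList x (gx+1) b) = ctreeL (seqList y (gx+1) b) := by
      apply ih gx b x y (by omega)
        (hx.mono (Set.Icc_subset_Icc (by omega) (le_refl _)))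
        (hy.mono (Set.Icc_subset_Icc (by omega) (le_refl _)))
      intro h h1 h2
      rw [PDa_shift a b gx h x hgxm.1 hgxm.2 hminx hx h1 h2,
        PDa_shift a b gx h y hgym.1 hgym.2 hminy hy h1 h2,
        hPD h (by omega) h2]
    rw [hL, hR]

lemma lemB : ∀ (n a b : ℕ) (x y : ℕ → ℤ), b - a ≤ n →
    Set.InjOn x (Set.Icc (a+1) b) → Set.InjOn y (Set.Icc (a+1) b) →
    (∀ h, a < h → h ≤ b → RPD b x h = RPD b y h) →
    ctreeL (seqList x (a+1) b) = ctreeL (seqList y (a+1) b) := by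
  intro n
  induction n with
  | zero =>
    intro a b x y hn _ _ _
    rw [seqList_nil x a b (by omega), seqList_nil y a b (by omega)]
  | succ n ih =>
    intro a b x y hn hx hy hPD
    by_cases hab : b ≤ a
    · rw [seqList_nil x a b hab, seqList_nil y a b hab]
    push_neg at hab
    obtain ⟨gx, hgxm, hgxmin⟩ := Finset.exists_min_image (Finset.Icc (a+1) b) x
      ⟨a+1, Finset.mem_Icc.mpr ⟨le_refl _, by omega⟩⟩
    obtain ⟨gy, hgym, hgymin⟩ := Finset.exists_min_image (Finset.Icc (a+1) b) y
      ⟨a+1, Finset.mem_Icc.mpr ⟨le_refl _, by omega⟩⟩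
    rw [Finset.mem_Icc] at hgxm hgym
    have hminx : ∀ j, a + 1 ≤ j → j ≤ b → x gx ≤ x j :=
      fun j h1 h2 => hgxmin j (Finset.mem_Icc.mpr ⟨h1, h2⟩)
    have hminy : ∀ j, a + 1 ≤ j → j ≤ b → y gy ≤ y j :=
      fun j h1 h2 => hgymin j (Finset.mem_Icc.mpr ⟨h1, h2⟩)
    have hgeq : gx = gy := by
      have h1 := argmin_not_gt_R a b gx gy x y hgxm.1 hgxm.2 hgym.1 hgym.2 hminx hminy hy hPD
      have h2 := argmin_not_gt_R a b gy gx y x hgym.1 hgym.2 hgxm.1 hgxm.2 hminy hminx hx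
        (fun h h1 h2 => (hPD h h1 h2).symm)
      omega
    subst hgeq
    have hnex : seqList x (a+1) b ≠ [] := by
      intro e
      have := seqList_length x (a+1) b
      rw [e] at this; simp at this; omega
    have hney : seqList y (a+1) b ≠ [] := by
      intro e
      have := seqList_length y (a+1) b
      rw [e] at this; simp at this; omega
    rw [ctreeL_eq_node _ hnex, ctreeL_eq_node _ hney,
      minIdx_seqList x a b gx hgxm.1 hgxm.2 hminx hx,
      minIdx_seqList y a b gx hgym.1 hgym.2 hminy hy,
      seqList_take x a b gx hgxm.1 hgxm.2, seqList_take y a b gx hgym.1 hgym.2,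
      seqList_drop x a b gx hgxm.1 hgxm.2, seqList_drop y a b gx hgym.1 hgym.2]
    have hL : ctreeL (seqList x (a+1) (gx-1)) = ctreeL (seqList y (a+1) (gx-1)) := by
      apply ih a (gx-1) x y (by omega)
        (hx.mono (Set.Icc_subset_Icc (le_refl _) (by omega)))
        (hy.mono (Set.Icc_subset_Icc (le_refl _) (by omega)))
      intro h h1 h2
      rw [RPD_shift a b gx h x hgxm.1 hgxm.2 hminx hx h1 (by omega),
        RPD_shift a b gx h y hgym.1 hgym.2 hminy hy h1 (by omega),
        hPD h h1 (by omega)]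
    have hR : ctreeL (seqList x (gx+1) b) = ctreeL (seqList y (gx+1) b) := by
      apply ih gx b x y (by omega)
        (hx.mono (Set.Icc_subset_Icc (by omega) (le_refl _)))
        (hy.mono (Set.Icc_subset_Icc (by omega) (le_refl _)))
        (fun h h1 h2 => hPD h (by omega) h2)
    rw [hL, hR]

end MainLemmas
theorem stmt19 (m j : ℕ) (hj : 1 ≤ j) (hm : 1 ≤ m) (p t : ℕ → ℤ)
    (hp : Set.InjOn p (Set.Icc 1 m))
    (ht : Set.InjOn t (Set.Icc j (j + m - 1)))
    (l r : ℕ)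
    (hl : ∀ h, 1 ≤ h → h ≤ l → PD p h = PD (fun k => t (j + k - 1)) h)
    (hr : ∀ h, m - r < h → h ≤ m → RPD m p h = RPD m (fun k => t (j + k - 1)) h)
    (hsum : m - 1 ≤ l + r) :
    ∃ h ∈ Finset.Icc 1 m,
      ctreeL (seqList p 1 (h - 1)) =
        ctreeL (seqList (fun k => t (j + k - 1)) 1 (h - 1)) ∧
      ctreeL (seqList p (h + 1) m) =
        ctreeL (seqList (fun k => t (j + k - 1)) (h + 1) m) := by
  set w : ℕ → ℤ := fun k => t (j + k - 1) with hw
  have hwinj : Set.InjOn w (Set.Icc 1 m) := by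
    intro k1 hk1 k2 hk2 he
    rw [Set.mem_Icc] at hk1 hk2
    have h1 : j + k1 - 1 ∈ Set.Icc j (j + m - 1) := Set.mem_Icc.mpr ⟨by omega, by omega⟩
    have h2 : j + k2 - 1 ∈ Set.Icc j (j + m - 1) := Set.mem_Icc.mpr ⟨by omega, by omega⟩
    have := ht h1 h2 he
    omega
  refine ⟨min (l+1) m, Finset.mem_Icc.mpr ⟨by omega, by omega⟩, ?_, ?_⟩
  · have H := lemA (min (l+1) m - 1) 0 (min (l+1) m - 1) p w (by omega)
      (hp.mono (by rw [Nat.zero_add]; exact Set.Icc_subset_Icc le_rfl (by omega)))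
      (hwinj.mono (by rw [Nat.zero_add]; exact Set.Icc_subset_Icc le_rfl (by omega)))
      (by
        intro h h1 h2
        rw [PDa_zero, PDa_zero]
        exact hl h (by omega) (by omega))
    simpa using H
  · exact lemB (m - min (l+1) m) (min (l+1) m) m p w (by omega)
      (hp.mono (Set.Icc_subset_Icc (by omega) le_rfl))
      (hwinj.mono (Set.Icc_subset_Icc (by omega) le_rfl))
      (fun h h1 h2 => hr h (by omega) h2)
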